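/- arXiv:2605.23446 — 4 statements merged into one kernel-verified Lean document; each statement's English description precedes it below -/
import Mathlib

section
/- Let G be a graph in which every vertex has degree at least 3, and let U ⊆ V(G). Then the columns of the matrix X_{G,U} are pairwise orthogonal, where X_{G,U} has rows indexed by vertices (v,S) of the CFI graph G_U and columns indexed by edges e ∈ E(G), with entry +1 if e ∈ E(v)∩S, −1 if e ∈ E(v)\S, and 0 if e ∉ E(v). -/
open Finset

variable {V : Type*} [Fintype V] [DecidableEq V]

/-- The vertex set of the CFI graph `G_U`: pairs `(v, S)` with `S ⊆ E(v)` and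
`|S| ≡ |{v} ∩ U| (mod 2)`. -/
def cfiVerts (G : SimpleGraph V) [DecidableRel G.Adj] (U : Finset V) :
    Finset (V × Finset (Sym2 V)) :=
  Finset.univ.filter
    (fun p => p.2 ⊆ G.incidenceFinset p.1 ∧ p.2.card % 2 = (if p.1 ∈ U then 1 else 0))

/-- The entry of the matrix `X_{G,U}` in the row of fiber vertex `(v,S)` and the
column of edge `e`: `+1` if `e ∈ E(v) ∩ S`, `-1` if `e ∈ E(v) \ S`, `0` if `e ∉ E(v)`. -/
def Xentry (G : SimpleGraph V) [DecidableRel G.Adj]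
    (p : V × Finset (Sym2 V)) (e : Sym2 V) : ℤ :=
  if e ∈ G.incidenceFinset p.1 then (if e ∈ p.2 then 1 else -1) else 0

open scoped symmDiff in
private lemma card_symmDiff_mod_two {α : Type*} [DecidableEq α] (s t : Finset α) :
    (s ∆ t).card % 2 = (s.card + t.card) % 2 := by
  have h1 : (s \ t).card + (s ∩ t).card = s.card := Finset.card_sdiff_add_card_inter s t
  have h2 : (t \ s).card + (t ∩ s).card = t.card := Finset.card_sdiff_add_card_inter t s
  have hd : Disjoint (s \ t) (t \ s) := disjoint_sdiff_sdiff
  have h3 : (s ∆ t).card = (s \ t).card + (t \ s).card := by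
    rw [symmDiff_def, sup_eq_union, Finset.card_union_of_disjoint hd]
  have h4 : (s ∩ t).card = (t ∩ s).card := by rw [Finset.inter_comm]
  omega

open scoped symmDiff in
/-- If every vertex of `G` has degree at least 3 and `U ⊆ V(G)`, then
the columns of the matrix `X_{G,U}` are pairwise orthogonal. -/
theorem X_columns_orthogonal (G : SimpleGraph V) [DecidableRel G.Adj] (U : Finset V)
    (hdeg : ∀ v : V, 3 ≤ G.degree v)
    (e₁ e₂ : Sym2 V) (he₁ : e₁ ∈ G.edgeFinset) (he₂ : e₂ ∈ G.edgeFinset) (hne : e₁ ≠ e₂) :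
    ∑ p ∈ cfiVerts G U, Xentry G p e₁ * Xentry G p e₂ = 0 := by
  classical
  -- choose a third edge at each vertex
  have hc : ∀ v : V, ∃ w, w ∈ G.incidenceFinset v ∧ w ≠ e₁ ∧ w ≠ e₂ := by
    intro v
    have hcard : 3 ≤ (G.incidenceFinset v).card := by
      rw [G.card_incidenceFinset_eq_degree]; exact hdeg v
    have hne2 : (G.incidenceFinset v \ {e₁, e₂}).Nonempty := by
      rw [← Finset.card_pos]
      have h1 : (G.incidenceFinset v).card - ({e₁, e₂} : Finset (Sym2 V)).card ≤
          (G.incidenceFinset v \ {e₁, e₂}).card := Finset.le_card_sdiff _ _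
      have h2 : ({e₁, e₂} : Finset (Sym2 V)).card ≤ 2 := Finset.card_insert_le _ _ |>.trans (by simp)
      omega
    obtain ⟨w, hw⟩ := hne2
    simp only [Finset.mem_sdiff, Finset.mem_insert, Finset.mem_singleton, not_or] at hw
    exact ⟨w, hw.1, hw.2.1, hw.2.2⟩
  choose c hcmem hce₁ hce₂ using hc
  set f : V × Finset (Sym2 V) → ℤ := fun p => Xentry G p e₁ * Xentry G p e₂ with hfdef
  apply Finset.sum_involution
    (g := fun p _ => if f p = 0 then p else (p.1, p.2 ∆ ({e₁, c p.1} : Finset (Sym2 V))))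
  case hg₁ =>
    intro p hp
    by_cases h0 : f p = 0
    · simp only [if_pos h0]
      show f p + f p = 0
      rw [h0]; ring
    · simp only [h0, if_neg, if_false]
      -- the entries are nonzero, so both edges are incident to p.1
      have he1v : e₁ ∈ G.incidenceFinset p.1 := by
        by_contra h
        exact h0 (by show Xentry G p e₁ * Xentry G p e₂ = 0; rw [Xentry, if_neg h, zero_mul])
      have he2v : e₂ ∈ G.incidenceFinset p.1 := by
        by_contra h
        exact h0 (by show Xentry G p e₁ * Xentry G p e₂ = 0; rw [Xentry, Xentry, if_neg h, mul_zero])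
      have he₂T : e₂ ∉ ({e₁, c p.1} : Finset (Sym2 V)) := by
        simp only [Finset.mem_insert, Finset.mem_singleton, not_or]
        exact ⟨hne.symm, fun h => hce₂ p.1 h.symm⟩
      have hm1 : e₁ ∈ p.2 ∆ ({e₁, c p.1} : Finset (Sym2 V)) ↔ e₁ ∉ p.2 := by
        simp [Finset.mem_symmDiff]
      have hm2 : e₂ ∈ p.2 ∆ ({e₁, c p.1} : Finset (Sym2 V)) ↔ e₂ ∈ p.2 := by
        simp [Finset.mem_symmDiff, he₂T]
      simp only [hfdef, Xentry, he1v, he2v, if_true, hm1, hm2]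
      by_cases h1 : e₁ ∈ p.2 <;> by_cases h2 : e₂ ∈ p.2 <;> simp [h1, h2] <;> ring
  case hg₃ =>
    intro p hp h0
    have h0 : f p ≠ 0 := h0
    simp only [h0, if_neg, if_false]
    intro hcontra
    have he1v : e₁ ∈ G.incidenceFinset p.1 := by
      by_contra h
      exact h0 (by show Xentry G p e₁ * Xentry G p e₂ = 0; rw [Xentry, if_neg h, zero_mul])
    have h2 := congrArg Prod.snd hcontra
    simp only at h2
    have : e₁ ∈ p.2 ∆ ({e₁, c p.1} : Finset (Sym2 V)) ↔ e₁ ∉ p.2 := by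
      simp [Finset.mem_symmDiff]
    rw [h2] at this
    tauto
  case g_mem =>
    intro p hp
    by_cases h0 : f p = 0
    · simpa [h0] using hp
    · simp only [h0, if_neg, if_false]
      simp only [cfiVerts, Finset.mem_filter, Finset.mem_univ, true_and] at hp ⊢
      have he1v : e₁ ∈ G.incidenceFinset p.1 := by
        by_contra h
        exact h0 (by show Xentry G p e₁ * Xentry G p e₂ = 0; rw [Xentry, if_neg h, zero_mul])
      constructor
      · -- subset
        intro x hx
        rw [Finset.mem_symmDiff] at hx
        rcases hx with ⟨hx, _⟩ | ⟨hx, _⟩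
        · exact hp.1 hx
        · simp only [Finset.mem_insert, Finset.mem_singleton] at hx
          rcases hx with rfl | rfl
          · exact he1v
          · exact hcmem p.1
      · -- parity
        have hTcard : ({e₁, c p.1} : Finset (Sym2 V)).card = 2 := by
          rw [Finset.card_insert_of_notMem
            (by simp only [Finset.mem_singleton]; exact fun h => hce₁ p.1 h.symm),
            Finset.card_singleton]
        have := card_symmDiff_mod_two p.2 ({e₁, c p.1} : Finset (Sym2 V))
        rw [hTcard] at this
        rw [this]
        have := hp.2
        omega
  case hg₄ =>
    intro p hp
    by_cases h0 : f p = 0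
    · simp [h0]
    · simp only [h0, if_neg, if_false]
      have hflip : f (p.1, p.2 ∆ ({e₁, c p.1} : Finset (Sym2 V))) = -f p := by
        have he1v : e₁ ∈ G.incidenceFinset p.1 := by
          by_contra h
          exact h0 (by show Xentry G p e₁ * Xentry G p e₂ = 0; rw [Xentry, if_neg h, zero_mul])
        have he2v : e₂ ∈ G.incidenceFinset p.1 := by
          by_contra h
          exact h0 (by show Xentry G p e₁ * Xentry G p e₂ = 0; rw [Xentry, Xentry, if_neg h, mul_zero])
        have he₂T : e₂ ∉ ({e₁, c p.1} : Finset (Sym2 V)) := by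
          simp only [Finset.mem_insert, Finset.mem_singleton, not_or]
          exact ⟨hne.symm, fun h => hce₂ p.1 h.symm⟩
        have hm1 : e₁ ∈ p.2 ∆ ({e₁, c p.1} : Finset (Sym2 V)) ↔ e₁ ∉ p.2 := by
          simp [Finset.mem_symmDiff]
        have hm2 : e₂ ∈ p.2 ∆ ({e₁, c p.1} : Finset (Sym2 V)) ↔ e₂ ∈ p.2 := by
          simp [Finset.mem_symmDiff, he₂T]
        simp only [hfdef, Xentry, he1v, he2v, if_true, hm1, hm2]
        by_cases h1 : e₁ ∈ p.2 <;> by_cases h2 : e₂ ∈ p.2 <;> simp [h1, h2]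
      have h0' : f (p.1, p.2 ∆ ({e₁, c p.1} : Finset (Sym2 V))) ≠ 0 := by
        rw [hflip]; exact neg_ne_zero.mpr h0
      simp only [h0', if_neg, if_false]
      ext x
      · rfl
      · simp [symmDiff_symmDiff_cancel_right]
end

section
/- Let U ∈ ℝ^{n×k} have rows U₁,...,Uₙ and let C ⊆ [n] be a class such that the multiset {Uᵢ ⊙ Uₘ : m ∈ C} equals {Uⱼ ⊙ Uₘ : m ∈ C} for all i,j ∈ C, where ⊙ is the elementwise product, all rows Uᵢ for i ∈ C have the same entrywise absolute values, and the rows {Uᵢ}_{i∈C} are pairwise distinct. Let sᵢ ∈ ℤ₂^K be the vector of sign bits of the nonzero entries of Uᵢ (on the common support K). Then the set A = {sᵢ : i ∈ C} is an affine subspace of ℤ₂^K. -/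
open Finset

/-- The sign-bit vector of a row `U i`: bit `1` at the coordinates where the entry is
negative, `0` elsewhere (in particular `0` off the support). -/
noncomputable def signBits {n k : ℕ} (U : Fin n → Fin k → ℝ) (i : Fin n) : Fin k → ZMod 2 :=
  fun col => if U i col < 0 then 1 else 0

lemma prodSign (a b : ℝ) (ha : a ≠ 0) (hb : b ≠ 0) :
    ((if a < 0 then 1 else 0) + (if b < 0 then 1 else 0) : ZMod 2)
      = if a * b < 0 then 1 else 0 := by
  rcases ha.lt_or_gt with ha' | ha' <;> rcases hb.lt_or_gt with hb' | hb'
  · rw [if_pos ha', if_pos hb', if_neg (not_lt.mpr (mul_pos_of_neg_of_neg ha' hb').le)]; decide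
  · rw [if_pos ha', if_neg (not_lt.mpr hb'.le), if_pos (mul_neg_of_neg_of_pos ha' hb')]; decide
  · rw [if_neg (not_lt.mpr ha'.le), if_pos hb', if_pos (mul_neg_of_pos_of_neg ha' hb')]; decide
  · rw [if_neg (not_lt.mpr ha'.le), if_neg (not_lt.mpr hb'.le),
      if_neg (not_lt.mpr (mul_pos ha' hb').le)]; decide

/-- Let `U ∈ ℝ^{n×k}` and let `C` be a class of rows such that the
multiset `{Uᵢ ⊙ Uₘ : m ∈ C}` of elementwise products is the same for all `i ∈ C`, all
rows in `C` share the same entrywise absolute values, and the rows of `C` are pairwise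
distinct.  Then the set of sign-bit vectors `{sᵢ : i ∈ C}` is an affine subspace of
`ℤ₂^k`. -/
theorem sign_bits_form_affine_subspace
    {n k : ℕ} (U : Fin n → Fin k → ℝ) (C : Finset (Fin n)) (hC : C.Nonempty)
    (habs : ∀ i ∈ C, ∀ j ∈ C, ∀ col : Fin k, |U i col| = |U j col|)
    (hdist : ∀ i ∈ C, ∀ j ∈ C, U i = U j → i = j)
    (hmult : ∀ i ∈ C, ∀ j ∈ C,
      C.val.map (fun m => fun col => U i col * U m col)
        = C.val.map (fun m => fun col => U j col * U m col)) :
    ∃ (a : Fin k → ZMod 2) (W : Submodule (ZMod 2) (Fin k → ZMod 2)),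
      {x : Fin k → ZMod 2 | ∃ i ∈ C, signBits U i = x}
        = (fun w => a + w) '' (W : Set (Fin k → ZMod 2)) := by
  obtain ⟨i₀, hi₀⟩ := hC
  -- char 2 fact
  have hself : ∀ x : Fin k → ZMod 2, x + x = 0 := by
    intro x; funext c; exact CharTwo.add_self_eq_zero _
  -- key: for i j p ∈ C, ∃ m ∈ C, signBits i + signBits p = signBits j + signBits m
  have key : ∀ i ∈ C, ∀ j ∈ C, ∀ p ∈ C, ∃ m ∈ C,
      signBits U i + signBits U p = signBits U j + signBits U m := by
    intro i hi j hj p hp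
    have h := hmult i hi j hj
    have hmem : (fun col => U i col * U p col) ∈
        C.val.map (fun m => fun col => U j col * U m col) := by
      rw [← h]
      exact Multiset.mem_map.mpr ⟨p, hp, rfl⟩
    obtain ⟨m, hm, hme⟩ := Multiset.mem_map.mp hmem
    refine ⟨m, hm, ?_⟩
    funext col
    have hcol := congrFun hme col
    simp only [signBits, Pi.add_apply]
    by_cases hz : U i col = 0
    · have hzj : U j col = 0 := by
        have := habs i hi j hj col; rw [hz, abs_zero] at this
        exact abs_eq_zero.mp this.symm
      have hzp : U p col = 0 := by
        have := habs i hi p hp col; rw [hz, abs_zero] at this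
        exact abs_eq_zero.mp this.symm
      have hzm : U m col = 0 := by
        have := habs i hi m hm col; rw [hz, abs_zero] at this
        exact abs_eq_zero.mp this.symm
      simp [hz, hzj, hzp, hzm]
    · have hnz : ∀ q ∈ C, U q col ≠ 0 := by
        intro q hq h0
        apply hz
        have := habs i hi q hq col; rw [h0, abs_zero] at this
        exact abs_eq_zero.mp this
      rw [prodSign _ _ hz (hnz p hp), prodSign _ _ (hnz j hj) (hnz m hm), hcol]
  set a := signBits U i₀ with ha
  refine ⟨a, {
    carrier := {x | ∃ i ∈ C, a + signBits U i = x}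
    zero_mem' := ⟨i₀, hi₀, hself a⟩
    add_mem' := by
      rintro x y ⟨i, hi, rfl⟩ ⟨j, hj, rfl⟩
      obtain ⟨m, hm, hme⟩ := key i hi j hj i₀ hi₀
      refine ⟨m, hm, ?_⟩
      have h1 : a = signBits U i + (signBits U j + signBits U m) := by
        have h := congrArg (fun z => signBits U i + z) hme
        rwa [← add_assoc, hself, zero_add] at h
      calc a + signBits U m
          = (signBits U i + (signBits U j + signBits U m)) + signBits U m := by rw [← h1]
        _ = signBits U i + signBits U j + (signBits U m + signBits U m) := by abel
        _ = signBits U i + signBits U j := by rw [hself, add_zero]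
        _ = (a + signBits U i) + (a + signBits U j) := by
            rw [show (a + signBits U i) + (a + signBits U j)
                = (a + a) + (signBits U i + signBits U j) from by abel, hself, zero_add]
    smul_mem' := by
      intro c x hx
      fin_cases c
      · show ∃ i ∈ C, a + signBits U i = (0 : ZMod 2) • x
        simpa using ⟨i₀, hi₀, hself a⟩
      · show ∃ i ∈ C, a + signBits U i = (1 : ZMod 2) • x
        simpa using hx
  }, ?_⟩
  ext x
  simp only [Set.mem_setOf_eq, Set.mem_image, SetLike.mem_coe]
  constructor
  · rintro ⟨i, hi, rfl⟩
    exact ⟨a + signBits U i, ⟨i, hi, rfl⟩, by rw [← add_assoc, hself a, zero_add]⟩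
  · rintro ⟨w, ⟨i, hi, rfl⟩, rfl⟩
    exact ⟨i, hi, by rw [← add_assoc, hself a, zero_add]⟩
end

section
/- Let s : ℝ^{n×k} → ℤ₂^k be permutation-invariant and satisfy that s(t·U) ⊕ t ⊕ s(U) is a sign automorphism of U for every column-wise orthonormal U and every t ∈ ℤ₂^k (where t·U flips the sign of column j iff tⱼ = 1, and a ∈ ℤ₂^k is a sign automorphism of U if a·U equals U up to a row permutation). Define c(U) to be the matrix s(U)·U with rows sorted lexicographically. Then c is invariant under the action of Sₙ × ℤ₂^k and c(U) lies in the orbit of U; i.e., c is a valid canonicalization. -/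
open Finset

variable {n k : ℕ}

/-- Sign action of `t ∈ ℤ₂^k` on an `n × k` matrix: flip the sign of column `j`
iff `tⱼ = 1`. -/
def signAct (t : Fin k → ZMod 2) (U : Matrix (Fin n) (Fin k) ℝ) :
    Matrix (Fin n) (Fin k) ℝ :=
  Matrix.of fun i j => (if t j = 1 then -1 else 1) * U i j

/-- Row-permutation action of `τ ∈ Sₙ` on an `n × k` matrix. -/
def permAct (τ : Equiv.Perm (Fin n)) (U : Matrix (Fin n) (Fin k) ℝ) :
    Matrix (Fin n) (Fin k) ℝ :=
  Matrix.of fun i j => U (τ i) j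

/-- `U` has orthonormal columns. -/
def OrthonormalCols (U : Matrix (Fin n) (Fin k) ℝ) : Prop :=
  ∀ j j' : Fin k, ∑ i, U i j * U i j' = if j = j' then 1 else 0

/-- `a ∈ ℤ₂^k` is a sign automorphism of `U`: `a·U` equals `U` up to a row
permutation. -/
def IsSignAut (U : Matrix (Fin n) (Fin k) ℝ) (a : Fin k → ZMod 2) : Prop :=
  ∃ τ : Equiv.Perm (Fin n), signAct a U = permAct τ U

/-- Sort the rows of a matrix lexicographically. -/
noncomputable def lexSortRows (U : Matrix (Fin n) (Fin k) ℝ) :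
    Matrix (Fin n) (Fin k) ℝ :=
  letI R : Lex (Fin k → ℝ) → Lex (Fin k → ℝ) → Prop := fun a b => a < b ∨ a = b
  letI : DecidableRel R := Classical.decRel _
  haveI : IsTrans (Lex (Fin k → ℝ)) R := by
    constructor
    rintro a b c (h₁ | rfl) (h₂ | rfl)
    · exact Or.inl (lt_trans h₁ h₂)
    · exact Or.inl h₁
    · exact Or.inl h₂
    · exact Or.inr rfl
  haveI : Std.Antisymm R := by
    constructor
    rintro a b (h₁ | rfl) (h₂ | h₂) <;> first | rfl | exact absurd h₂ (asymm h₁) | exact h₂.symm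
  haveI : Std.Total R := by
    constructor
    intro a b
    haveI : IsTrichotomous (Lex (Fin k → ℝ)) (· < ·) :=
      ⟨(Pi.isTrichotomous_lex _ _ (IsWellFounded.wf (r := ((· < ·) : Fin k → Fin k → Prop)))).1⟩
    rcases trichotomous_of ((· < ·) : Lex (Fin k → ℝ) → Lex (Fin k → ℝ) → Prop) a b with h | h | h
    · exact Or.inl (Or.inl h)
    · exact Or.inl (Or.inr h)
    · exact Or.inr (Or.inl h)
  Matrix.of fun i j =>
    ofLex (List.getD
      (Multiset.sort
        ((Finset.univ : Finset (Fin n)).val.map fun r => toLex (U r)) R)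
      i (toLex fun _ => 0)) j

/-- The candidate canonicalization induced by a sign canonicalization `s`:
apply the canonical signs and then sort rows lexicographically. -/
noncomputable def canon (s : Matrix (Fin n) (Fin k) ℝ → (Fin k → ZMod 2))
    (U : Matrix (Fin n) (Fin k) ℝ) : Matrix (Fin n) (Fin k) ℝ :=
  lexSortRows (signAct (s U) U)


section Aux

lemma signFlip_mul (x y : ZMod 2) :
    (if x + y = 1 then (-1:ℝ) else 1) =
      (if x = 1 then (-1:ℝ) else 1) * (if y = 1 then (-1:ℝ) else 1) := by
  have hZ : ∀ x : ZMod 2, x = 0 ∨ x = 1 := by decide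
  rcases hZ x with rfl | rfl <;> rcases hZ y with rfl | rfl <;> simp +decide

lemma signAct_signAct (a b : Fin k → ZMod 2) (U : Matrix (Fin n) (Fin k) ℝ) :
    signAct a (signAct b U) = signAct (a + b) U := by
  ext i j
  simp only [signAct, Matrix.of_apply, Pi.add_apply, signFlip_mul]
  ring

lemma signAct_permAct (a : Fin k → ZMod 2) (τ : Equiv.Perm (Fin n))
    (U : Matrix (Fin n) (Fin k) ℝ) :
    signAct a (permAct τ U) = permAct τ (signAct a U) := rfl

lemma lexSortRows_congr (U V : Matrix (Fin n) (Fin k) ℝ)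
    (h : ((Finset.univ : Finset (Fin n)).val.map fun r => toLex (U r)) =
      (Finset.univ : Finset (Fin n)).val.map fun r => toLex (V r)) :
    lexSortRows U = lexSortRows V := by
  unfold lexSortRows
  rw [h]

lemma lexSortRows_permAct (τ : Equiv.Perm (Fin n)) (U : Matrix (Fin n) (Fin k) ℝ) :
    lexSortRows (permAct τ U) = lexSortRows U := by
  apply lexSortRows_congr
  have h1 : (fun r => toLex ((permAct τ U) r)) = (fun r => toLex (U r)) ∘ ⇑τ := rfl
  rw [h1, ← Multiset.map_map, Multiset.map_univ_val_equiv τ]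

/-- An explicit linear order on lexicographic row vectors. -/
@[reducible] noncomputable def lexLO : LinearOrder (Lex (Fin k → ℝ)) :=
  @linearOrderOfSTO (Lex (Fin k → ℝ)) (· < ·)
    { trichotomous :=
        (Pi.isTrichotomous_lex _ _
          (IsWellFounded.wf (r := ((· < ·) : Fin k → Fin k → Prop)))).1 }
    (Classical.decRel _)

lemma lexSortRows_eq_permAct (U : Matrix (Fin n) (Fin k) ℝ) :
    ∃ τ : Equiv.Perm (Fin n), lexSortRows U = permAct τ U := by
  classical
  letI R : Lex (Fin k → ℝ) → Lex (Fin k → ℝ) → Prop := fun a b => a < b ∨ a = b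
  letI : DecidableRel R := Classical.decRel _
  haveI : IsTrans (Lex (Fin k → ℝ)) R := by
    constructor
    rintro a b c (h₁ | rfl) (h₂ | rfl)
    · exact Or.inl (lt_trans h₁ h₂)
    · exact Or.inl h₁
    · exact Or.inl h₂
    · exact Or.inr rfl
  haveI : Std.Antisymm R := by
    constructor
    rintro a b (h₁ | rfl) (h₂ | h₂) <;> first | rfl | exact absurd h₂ (asymm h₁) | exact h₂.symm
  haveI : Std.Total R := by
    constructor
    intro a b
    haveI : IsTrichotomous (Lex (Fin k → ℝ)) (· < ·) :=
      ⟨(Pi.isTrichotomous_lex _ _ (IsWellFounded.wf (r := ((· < ·) : Fin k → Fin k → Prop)))).1⟩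
    rcases trichotomous_of ((· < ·) : Lex (Fin k → ℝ) → Lex (Fin k → ℝ) → Prop) a b with h | h | h
    · exact Or.inl (Or.inl h)
    · exact Or.inl (Or.inr h)
    · exact Or.inr (Or.inl h)
  set f : Fin n → Lex (Fin k → ℝ) := fun i => toLex (U i) with hf
  set σ : Equiv.Perm (Fin n) := @Tuple.sort n _ lexLO f with hσ
  refine ⟨σ, ?_⟩
  set m : Multiset (Lex (Fin k → ℝ)) :=
    (Finset.univ : Finset (Fin n)).val.map fun r => toLex (U r) with hm
  set l : List (Lex (Fin k → ℝ)) := Multiset.sort m R with hl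
  set l' : List (Lex (Fin k → ℝ)) := List.ofFn (fun i => f (σ i)) with hl'
  have hml : (l : Multiset (Lex (Fin k → ℝ))) = m := Multiset.sort_eq m R
  have hml' : (l' : Multiset (Lex (Fin k → ℝ))) = m := by
    rw [hl', ← Fin.univ_val_map (fun i => f (σ i))]
    show Multiset.map (f ∘ ⇑σ) Finset.univ.val = m
    rw [← Multiset.map_map, Multiset.map_univ_val_equiv σ]
  have hperm2 : l.Perm l' := Multiset.coe_eq_coe.mp (hml.trans hml'.symm)
  have hs1 : l.Pairwise R := Multiset.pairwise_sort m R
  have hs2 : l'.Pairwise R := by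
    rw [hl', List.pairwise_ofFn]
    intro i j hij
    have h := @Tuple.monotone_sort n _ lexLO f i j (le_of_lt hij)
    exact Or.symm h
  have hle : l = l' := hperm2.eq_of_pairwise' hs1 hs2
  have hlen : l'.length = n := List.length_ofFn
  ext i j
  show ofLex (List.getD l (i : ℕ) (toLex fun _ => 0)) j = permAct σ U i j
  rw [hle, List.getD_eq_getElem _ _ (by rw [hlen]; exact i.isLt)]
  have hval : l'[(i : ℕ)]'(by rw [hlen]; exact i.isLt) = f (σ i) := by
    simp only [hl', List.getElem_ofFn, Fin.eta]
  rw [hval]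
  rfl

lemma add_self_cancel (a b : Fin k → ZMod 2) : b + (a + b) = a := by
  funext j
  have hx : ∀ x y : ZMod 2, y + (x + y) = x := by decide
  simp only [Pi.add_apply]
  exact hx _ _

end Aux

/-- If `s` is permutation-invariant and `s(t·U) ⊕ t ⊕ s(U)` is a
sign automorphism of `U` for every column-orthonormal `U` and every `t`, then the map
`c(U) = lexsort(s(U)·U)` is invariant under the action of `Sₙ × ℤ₂^k` and `c(U)` lies
in the orbit of `U`; i.e. `c` is a valid canonicalization. -/
theorem sign_canonicalization_induces_canonicalization
    (s : Matrix (Fin n) (Fin k) ℝ → (Fin k → ZMod 2))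
    (hperm : ∀ (U : Matrix (Fin n) (Fin k) ℝ) (τ : Equiv.Perm (Fin n)),
      s (permAct τ U) = s U)
    (hsign : ∀ U : Matrix (Fin n) (Fin k) ℝ, OrthonormalCols U →
      ∀ t : Fin k → ZMod 2, IsSignAut U (s (signAct t U) + t + s U)) :
    ∀ U : Matrix (Fin n) (Fin k) ℝ, OrthonormalCols U →
      (∀ (τ : Equiv.Perm (Fin n)) (t : Fin k → ZMod 2),
        canon s (permAct τ (signAct t U)) = canon s U) ∧
      (∃ (τ : Equiv.Perm (Fin n)) (t : Fin k → ZMod 2),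
        canon s U = permAct τ (signAct t U)) := by
  intro U hU
  constructor
  · intro τ t
    unfold canon
    rw [hperm]
    rw [show signAct (s (signAct t U)) (permAct τ (signAct t U)) =
        permAct τ (signAct (s (signAct t U)) (signAct t U)) from rfl,
      lexSortRows_permAct]
    obtain ⟨σ, hσ⟩ := hsign U hU t
    have h1 : signAct (s (signAct t U)) (signAct t U) =
        signAct (s U) (signAct (s (signAct t U) + t + s U) U) := by
      rw [signAct_signAct, signAct_signAct]
      rw [show s U + (s (signAct t U) + t + s U) = s (signAct t U) + t from
        add_self_cancel _ _]
    rw [h1, hσ, show signAct (s U) (permAct σ U) = permAct σ (signAct (s U) U) from rfl,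
      lexSortRows_permAct]
  · obtain ⟨τ, hτ⟩ := lexSortRows_eq_permAct (signAct (s U) U)
    exact ⟨τ, s U, hτ⟩
end

section
/- Let G be a graph, U ⊆ V(G), and let f : V(G_U) → ℝ be constant on fibers, i.e., f(v,S) = y(v) for some y : V(G) → ℝ. If y is an eigenvector of the adjacency matrix of G with eigenvalue λ, and G is such that every base vertex has degree 3, then f is an eigenvector of the adjacency matrix of the CFI graph G_U with eigenvalue 2λ. -/
open Finset SimpleGraph

variable {V : Type*} [Fintype V] [DecidableEq V]

/-- Vertices of the CFI graph `G_U`. -/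
def CFIVert (G : SimpleGraph V) [DecidableRel G.Adj] (U : Finset V) : Type _ :=
  {p : V × Finset (Sym2 V) //
    p.2 ⊆ G.incidenceFinset p.1 ∧ p.2.card % 2 = (if p.1 ∈ U then 1 else 0)}

/-- The CFI graph `G_U`: `(v,S)` and `(u,T)` are adjacent iff `uv ∈ E(G)` and
`uv ∉ S △ T`. -/
def CFIGraph (G : SimpleGraph V) [DecidableRel G.Adj] (U : Finset V) :
    SimpleGraph (CFIVert G U) where
  Adj a b := G.Adj a.1.1 b.1.1 ∧ s(a.1.1, b.1.1) ∉ symmDiff a.1.2 b.1.2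
  symm := ⟨by
    rintro a b ⟨h1, h2⟩
    refine ⟨h1.symm, ?_⟩
    rwa [Sym2.eq_swap, symmDiff_comm]⟩
  loopless := ⟨by rintro a ⟨h1, _⟩; exact G.irrefl h1⟩

instance (G : SimpleGraph V) [DecidableRel G.Adj] (U : Finset V) :
    Fintype (CFIVert G U) := by
  unfold CFIVert; infer_instance

instance (G : SimpleGraph V) [DecidableRel G.Adj] (U : Finset V) :
    DecidableRel (CFIGraph G U).Adj := fun a b => by
  unfold CFIGraph; exact instDecidableAnd


lemma finset_subset_pair {α : Type*} [DecidableEq α] {x z : α} {T : Finset α} :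
    T ⊆ ({x, z} : Finset α) ↔ T = ∅ ∨ T = {x} ∨ T = {z} ∨ T = {x, z} := by
  constructor
  · intro h
    have h' : (T : Set α) ⊆ ({x, z} : Set α) := by
      intro a ha
      have := h ha
      simpa using this
    rcases Set.subset_pair_iff_eq.mp h' with h1 | h1 | h1 | h1
    · exact Or.inl (Finset.coe_injective (by simpa using h1))
    · exact Or.inr (Or.inl (Finset.coe_injective (by simpa using h1)))
    · exact Or.inr (Or.inr (Or.inl (Finset.coe_injective (by simpa using h1))))
    · exact Or.inr (Or.inr (Or.inr (Finset.coe_injective (by simpa using h1))))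
  · rintro (rfl | rfl | rfl | rfl) <;> intro a ha <;> simp_all

lemma count_parity_pair {α : Type*} [DecidableEq α] (t : Finset α) (ht : t.card = 2)
    (b : ℕ) (hb : b < 2) :
    ((t.powerset).filter (fun T => T.card % 2 = b)).card = 2 := by
  obtain ⟨x, z, hxz, rfl⟩ := Finset.card_eq_two.mp ht
  have hcard : ({x, z} : Finset α).card = 2 := by
    rw [Finset.card_insert_of_notMem (by simpa using hxz), Finset.card_singleton]
  interval_cases b
  · have : (({x, z} : Finset α).powerset.filter (fun T => T.card % 2 = 0)) =
        ({∅, {x, z}} : Finset (Finset α)) := by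
      ext T
      simp only [mem_filter, mem_powerset, finset_subset_pair, mem_insert, mem_singleton]
      constructor
      · rintro ⟨rfl | rfl | rfl | rfl, hpar⟩ <;> simp_all
      · rintro (rfl | rfl) <;> simp_all
    rw [this, Finset.card_insert_of_notMem ?_, Finset.card_singleton]
    intro h
    rw [Finset.mem_singleton] at h
    have := congrArg Finset.card h
    rw [Finset.card_empty, hcard] at this
    exact absurd this (by norm_num)
  · have : (({x, z} : Finset α).powerset.filter (fun T => T.card % 2 = 1)) =
        ({{x}, {z}} : Finset (Finset α)) := by
      ext T
      simp only [mem_filter, mem_powerset, finset_subset_pair, mem_insert, mem_singleton]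
      constructor
      · rintro ⟨rfl | rfl | rfl | rfl, hpar⟩ <;> simp_all
      · rintro (rfl | rfl) <;> simp_all
    rw [this, Finset.card_insert_of_notMem (by simp [Finset.ext_iff]; exact hxz),
      Finset.card_singleton]

lemma count_main {α : Type*} [DecidableEq α] (s : Finset α) (hs : s.card = 3)
    (e : α) (he : e ∈ s) (b : ℕ) (hb : b < 2) (c : Prop) [Decidable c] :
    ((s.powerset).filter (fun T => T.card % 2 = b ∧ (e ∈ T ↔ c))).card = 2 := by
  classical
  set b' : ℕ := if c then (b + 1) % 2 else b with hb'
  have hb'2 : b' < 2 := by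
    rw [hb']; split
    · exact Nat.mod_lt _ (by norm_num)
    · exact hb
  have hcard' : (s.erase e).card = 2 := by
    rw [Finset.card_erase_of_mem he, hs]
  have key : ((s.powerset).filter (fun T => T.card % 2 = b ∧ (e ∈ T ↔ c))).card
      = (((s.erase e).powerset).filter (fun T => T.card % 2 = b')).card := by
    apply Finset.card_nbij' (fun T => T.erase e) (fun T => if c then insert e T else T)
    · intro T hT
      simp only [Finset.mem_coe, mem_filter, mem_powerset] at hT ⊢
      obtain ⟨hsub, hpar, hmem⟩ := hT
      refine ⟨fun a ha => Finset.mem_erase.mpr ⟨(Finset.mem_erase.mp ha).1,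
        hsub (Finset.mem_erase.mp ha).2⟩, ?_⟩
      by_cases hc : c
      · have heT : e ∈ T := hmem.mpr hc
        have hpos : 1 ≤ T.card := Finset.card_pos.mpr ⟨e, heT⟩
        have : T.card = (T.erase e).card + 1 := by
          rw [Finset.card_erase_of_mem heT]; omega
        rw [hb']
        rw [if_pos hc]
        omega
      · have heT : e ∉ T := fun h => hc (hmem.mp h)
        rw [Finset.erase_eq_of_notMem heT, hb']
        rw [if_neg hc]
        exact hpar
    · intro T hT
      simp only [Finset.mem_coe, mem_filter, mem_powerset] at hT ⊢
      obtain ⟨hsub, hpar⟩ := hT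
      have heT : e ∉ T := fun h => (Finset.mem_erase.mp (hsub h)).1 rfl
      by_cases hc : c
      · rw [if_pos hc]
        refine ⟨Finset.insert_subset he (hsub.trans (Finset.erase_subset _ _)), ?_, by simp [hc]⟩
        rw [Finset.card_insert_of_notMem heT]
        rw [hb'] at hpar
        rw [if_pos hc] at hpar
        omega
      · rw [if_neg hc]
        refine ⟨hsub.trans (Finset.erase_subset _ _), ?_, by tauto⟩
        rw [hb'] at hpar
        rw [if_neg hc] at hpar; exact hpar
    · intro T hT
      simp only [Finset.mem_coe, mem_filter, mem_powerset] at hT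
      obtain ⟨hsub, hpar, hmem⟩ := hT
      beta_reduce
      by_cases hc : c
      · rw [if_pos hc]
        rw [Finset.insert_erase (hmem.mpr hc)]
      · rw [if_neg hc]
        exact Finset.erase_eq_of_notMem (fun h => hc (hmem.mp h))
    · intro T hT
      simp only [Finset.mem_coe, mem_filter, mem_powerset] at hT
      obtain ⟨hsub, hpar⟩ := hT
      have heT : e ∉ T := fun h => (Finset.mem_erase.mp (hsub h)).1 rfl
      beta_reduce
      by_cases hc : c
      · rw [if_pos hc]; exact Finset.erase_insert heT
      · rw [if_neg hc]; exact Finset.erase_eq_of_notMem heT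

  rw [key, count_parity_pair _ hcard' b' hb'2]

/-- If every vertex of `G` has degree `3`, `y` is an eigenvector of
the adjacency matrix of `G` with eigenvalue `λ`, and `f` is the fiber-constant lift
`f(v,S) = y(v)` to the CFI graph `G_U`, then `f` is an eigenvector of the adjacency
matrix of `G_U` with eigenvalue `2λ`. -/
theorem fiber_constant_lift_is_eigenvector
    (G : SimpleGraph V) [DecidableRel G.Adj] (U : Finset V)
    (hdeg : ∀ v : V, G.degree v = 3)
    (lam : ℝ) (y : V → ℝ) (hy : y ≠ 0)
    (heig : (G.adjMatrix ℝ).mulVec y = lam • y) :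
    ((CFIGraph G U).adjMatrix ℝ).mulVec (fun p : CFIVert G U => y p.1.1)
        = (2 * lam) • (fun p : CFIVert G U => y p.1.1) ∧
    (fun p : CFIVert G U => y p.1.1) ≠ 0 := by
  classical
  have hmem_e : ∀ {v u : V}, G.Adj v u → s(v, u) ∈ G.incidenceFinset u := by
    intro v u h
    rw [SimpleGraph.mem_incidenceFinset, SimpleGraph.mk'_mem_incidenceSet_iff]
    exact ⟨h, Or.inr rfl⟩
  constructor
  · funext p
    set v : V := p.1.1 with hv
    set S : Finset (Sym2 V) := p.1.2 with hS
    have hGv : ∑ u ∈ G.neighborFinset v, y u = lam * y v := by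
      have := congrFun heig v
      rwa [SimpleGraph.adjMatrix_mulVec_apply, Pi.smul_apply, smul_eq_mul] at this
    rw [Pi.smul_apply, smul_eq_mul, SimpleGraph.adjMatrix_mulVec_apply]
    have h1 : (CFIGraph G U).neighborFinset p
        = Finset.univ.filter (fun q => (CFIGraph G U).Adj p q) := by
      ext q; simp [SimpleGraph.mem_neighborFinset]
    rw [h1, Finset.sum_filter]
    set Pred : V × Finset (Sym2 V) → Prop := fun x =>
      x.2 ⊆ G.incidenceFinset x.1 ∧ x.2.card % 2 = (if x.1 ∈ U then 1 else 0) with hPred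
    set f : V × Finset (Sym2 V) → ℝ := fun x =>
      if (G.Adj v x.1 ∧ s(v, x.1) ∉ symmDiff S x.2) then y x.1 else 0 with hf
    have h2 : ∑ q : CFIVert G U, (if (CFIGraph G U).Adj p q then y q.1.1 else 0)
        = ∑ q : CFIVert G U, f q.1 := by
      refine Finset.sum_congr rfl fun q _ => ?_
      exact if_congr Iff.rfl rfl rfl
    rw [h2]
    have h3 : ∑ q : CFIVert G U, f q.1
        = ∑ x ∈ Finset.univ.filter Pred, f x :=
      (Finset.sum_subtype _ (fun x => by simp [hPred]) f).symm
    rw [h3, Finset.sum_filter, Fintype.sum_prod_type]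
    have inner : ∀ u : V,
        (∑ T : Finset (Sym2 V), if Pred (u, T) then f (u, T) else 0)
          = if G.Adj v u then 2 * y u else 0 := by
      intro u
      by_cases hadj : G.Adj v u
      · rw [if_pos hadj]
        set b : ℕ := if u ∈ U then 1 else 0 with hb
        set e : Sym2 V := s(v, u) with he
        have hterm : ∀ T : Finset (Sym2 V),
            (if Pred (u, T) then f (u, T) else 0)
              = if (T ∈ (G.incidenceFinset u).powerset ∧
                    (T.card % 2 = b ∧ (e ∈ T ↔ e ∈ S))) then y u else 0 := by
          intro T
          have hsd : e ∉ symmDiff S T ↔ (e ∈ T ↔ e ∈ S) := by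
            simp only [Finset.mem_symmDiff]
            tauto
          simp only [hPred, hf, Finset.mem_powerset]
          by_cases hP1 : T ⊆ G.incidenceFinset u
          · by_cases hP2 : T.card % 2 = b
            · rw [if_pos ⟨hP1, hP2⟩]
              by_cases hP3 : e ∈ T ↔ e ∈ S
              · rw [if_pos ⟨hadj, hsd.mpr hP3⟩, if_pos ⟨hP1, hP2, hP3⟩]
              · rw [if_neg (fun hc => hP3 (hsd.mp hc.2)), if_neg (fun hc => hP3 hc.2.2)]
            · rw [if_neg (fun hc => hP2 hc.2), if_neg (fun hc => hP2 hc.2.1)]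
          · rw [if_neg (fun hc => hP1 hc.1), if_neg (fun hc => hP1 hc.1)]
        rw [Finset.sum_congr rfl fun T _ => hterm T]
        rw [← Finset.sum_filter, Finset.sum_const]
        have hfilt : (Finset.univ.filter (fun T => T ∈ (G.incidenceFinset u).powerset ∧
              (T.card % 2 = b ∧ (e ∈ T ↔ e ∈ S))))
            = ((G.incidenceFinset u).powerset).filter
                (fun T => T.card % 2 = b ∧ (e ∈ T ↔ e ∈ S)) := by
          ext T
          simp only [Finset.mem_filter, Finset.mem_univ, true_and]
        rw [hfilt, count_main _ ?_ e (hmem_e hadj) b ?_ _]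
        · simp [nsmul_eq_mul]
        · rw [SimpleGraph.card_incidenceFinset_eq_degree, hdeg]
        · rw [hb]; split <;> norm_num
      · rw [if_neg hadj]
        refine Finset.sum_eq_zero fun T _ => ?_
        have hfz : f (u, T) = 0 := by
          simp only [hf]
          exact if_neg (fun hc => hadj hc.1)
        rw [hfz, ite_self]
    rw [Finset.sum_congr rfl fun u _ => inner u, ← Finset.sum_filter,
      ← SimpleGraph.neighborFinset_eq_filter, ← Finset.mul_sum, hGv]
    ring
  · intro h0
    obtain ⟨w, hw⟩ : ∃ w, y w ≠ 0 := by
      by_contra h; push_neg at h; exact hy (funext h)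
    have hScex : ∃ S : Finset (Sym2 V), S ⊆ G.incidenceFinset w ∧
        S.card % 2 = (if w ∈ U then 1 else 0) := by
      by_cases hwU : w ∈ U
      · obtain ⟨e, he⟩ := Finset.card_pos.mp
          (by rw [SimpleGraph.card_incidenceFinset_eq_degree, hdeg]; norm_num :
            0 < (G.incidenceFinset w).card)
        exact ⟨{e}, by simpa using he, by simp [hwU]⟩
      · exact ⟨∅, by simp, by simp [hwU]⟩
    obtain ⟨S, hS1, hS2⟩ := hScex
    have := congrFun h0 ⟨(w, S), hS1, hS2⟩
    simp only [Pi.zero_apply] at this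
    exact hw this
end
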